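/- If f: Dⁿ → ℝ is α-bisubmodular, then its Lovász extension equals its convex closure: f^L(x) = f⁻(x) for all x ∈ [-α,1]ⁿ. -/
import Mathlib


open Finset

/-- The three-element domain `D = {-α, 0, 1}`, abstractly. -/
inductive D3 : Type
  | neg : D3
  | zero : D3
  | one : D3
deriving DecidableEq

instance : Fintype D3 :=
  ⟨{D3.neg, D3.zero, D3.one}, by rintro (_ | _ | _) <;> simp⟩

namespace D3

/-- The embedding of `D3` into `ℝ` sending `neg ↦ -α`, `zero ↦ 0`, `one ↦ 1`. -/
def emb (α : ℝ) : D3 → ℝ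
  | neg => -α
  | zero => 0
  | one => 1

/-- The partial order `0 ≺ 1`, `0 ≺ -α`, with `1` and `-α` incomparable. -/
instance : PartialOrder D3 where
  le x y := x = y ∨ x = zero
  le_refl x := Or.inl rfl
  le_trans x y z hxy hyz := by
    rcases hxy with rfl | rfl
    · exact hyz
    · exact Or.inr rfl
  le_antisymm x y hxy hyx := by
    rcases hxy with rfl | rfl
    · rfl
    · rcases hyx with rfl | rfl <;> rfl

/-- `∧₀` : `1 ∧₀ (-α) = (-α) ∧₀ 1 = 0`, and min w.r.t. `≺` otherwise. -/
def meet0 (x y : D3) : D3 := if x = y then x else zero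

/-- `∨₀` : `1 ∨₀ (-α) = (-α) ∨₀ 1 = 0`, and max w.r.t. `≺` otherwise. -/
def join0 (x y : D3) : D3 :=
  if x = y then x else if x = zero then y else if y = zero then x else zero

/-- `∨₁` : `1 ∨₁ (-α) = (-α) ∨₁ 1 = 1`, and max w.r.t. `≺` otherwise. -/
def join1 (x y : D3) : D3 :=
  if x = y then x else if x = zero then y else if y = zero then x else one

end D3

/-- Componentwise `∧₀` on `Dⁿ`. -/
def vmeet0 {n : ℕ} (a b : Fin n → D3) : Fin n → D3 := fun i => D3.meet0 (a i) (b i)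

/-- Componentwise `∨₀` on `Dⁿ`. -/
def vjoin0 {n : ℕ} (a b : Fin n → D3) : Fin n → D3 := fun i => D3.join0 (a i) (b i)

/-- Componentwise `∨₁` on `Dⁿ`. -/
def vjoin1 {n : ℕ} (a b : Fin n → D3) : Fin n → D3 := fun i => D3.join1 (a i) (b i)

/-- `lam` is a probability distribution on `Dⁿ`. -/
def IsDist (n : ℕ) (lam : (Fin n → D3) → ℝ) : Prop :=
  (∀ a, 0 ≤ lam a ∧ lam a ≤ 1) ∧ ∑ a : Fin n → D3, lam a = 1

/-- `lam` has marginal vector `x`, i.e. `Σ_a lam(a)·a = x` in `ℝⁿ`. -/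
def HasMarginal (α : ℝ) (n : ℕ) (lam : (Fin n → D3) → ℝ) (x : Fin n → ℝ) : Prop :=
  ∀ i, ∑ a : Fin n → D3, lam a * D3.emb α (a i) = x i

/-- The support of `lam` forms a chain w.r.t. the componentwise order on `Dⁿ`. -/
def ChainSupp (n : ℕ) (lam : (Fin n → D3) → ℝ) : Prop :=
  ∀ a b : Fin n → D3, lam a ≠ 0 → lam b ≠ 0 → a ≤ b ∨ b ≤ a

/-- The box `[-α,1]ⁿ`. -/
def Box (α : ℝ) (n : ℕ) : Set (Fin n → ℝ) := {x | ∀ i, x i ∈ Set.Icc (-α) 1}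

/-- `f : Dⁿ → ℝ` is α-bisubmodular. -/
def AlphaBisub (α : ℝ) (n : ℕ) (f : (Fin n → D3) → ℝ) : Prop :=
  ∀ a b : Fin n → D3,
    f (vmeet0 a b) + α * f (vjoin0 a b) + (1 - α) * f (vjoin1 a b) ≤ f a + f b

/-- Number of zero coordinates. -/
def zc {n : ℕ} (c : Fin n → D3) : ℕ := (Finset.univ.filter fun i => c i = D3.zero).card

/-- The convex closure `f⁻(x)`. -/
noncomputable def cClos (α : ℝ) (n : ℕ) (f : (Fin n → D3) → ℝ) (x : Fin n → ℝ) : ℝ :=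
  sInf {y | ∃ lam, IsDist n lam ∧ HasMarginal α n lam x ∧ y = ∑ a : Fin n → D3, lam a * f a}
namespace Stmt10

open D3 Finset

lemma D3.le_iff (x y : D3) : x ≤ y ↔ x = y ∨ x = D3.zero := Iff.rfl

/-- real indicator of being nonzero -/
def nind (d : D3) : ℝ := if d = D3.zero then 0 else 1

/-- weighted support size -/
def nsR {n : ℕ} (c : Fin n → D3) : ℝ := ∑ i, nind (c i)

lemma emb_id (α : ℝ) (u v : D3) :
    D3.emb α (D3.meet0 u v) + α * D3.emb α (D3.join0 u v)
      + (1 - α) * D3.emb α (D3.join1 u v) = D3.emb α u + D3.emb α v := by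
  rcases u <;> rcases v <;> simp [D3.meet0, D3.join0, D3.join1, D3.emb] <;> ring

def Hc (α : ℝ) (u v : D3) : ℝ :=
  nind (D3.meet0 u v) + α * nind (D3.join0 u v) + (1 - α) * nind (D3.join1 u v)
    - nind u - nind v

lemma Hc_eq (α : ℝ) (u v : D3) :
    Hc α u v = if u ≠ D3.zero ∧ v ≠ D3.zero ∧ u ≠ v then -(1 + α) else 0 := by
  rcases u <;> rcases v <;> simp [Hc, nind, D3.meet0, D3.join0, D3.join1] <;> ring

def Qc (α : ℝ) (u v u' v' : D3) : ℝ :=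
  nind (D3.meet0 u v) * nind (D3.meet0 u' v')
    + α * (nind (D3.join0 u v) * nind (D3.join0 u' v'))
    + (1 - α) * (nind (D3.join1 u v) * nind (D3.join1 u' v'))
    - nind u * nind u' - nind v * nind v'

lemma Qc_nonneg (α : ℝ) (hα : α ∈ Set.Ioc (0:ℝ) 1) (u v u' v' : D3)
    (hX : ¬(u ≠ D3.zero ∧ v ≠ D3.zero ∧ u ≠ v))
    (hX' : ¬(u' ≠ D3.zero ∧ v' ≠ D3.zero ∧ u' ≠ v')) :
    0 ≤ Qc α u v u' v' := by
  obtain ⟨h1, h2⟩ := hα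
  rcases u <;> rcases v <;> rcases u' <;> rcases v' <;>
    simp_all [Qc, nind, D3.meet0, D3.join0, D3.join1] <;> linarith

lemma Qc_one (α : ℝ) (u v u' v' : D3)
    (h1 : u ≠ D3.zero) (h2 : v = D3.zero) (h3 : u' = D3.zero) (h4 : v' ≠ D3.zero) :
    Qc α u v u' v' = 1 := by
  subst h2; subst h3
  rcases u <;> rcases v' <;> simp_all [Qc, nind, D3.meet0, D3.join0, D3.join1] <;> ring

end Stmt10
namespace Stmt10
open D3 Finset

lemma sum_shift {n : ℕ} (lam : (Fin n → D3) → ℝ) (ε α : ℝ) (m j0 j1 a b : Fin n → D3)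
    (g : (Fin n → D3) → ℝ) :
    ∑ c : Fin n → D3, (lam c + ε * ((if c = m then 1 else 0) + α * (if c = j0 then 1 else 0)
      + (1 - α) * (if c = j1 then 1 else 0) - (if c = a then 1 else 0)
      - (if c = b then 1 else 0))) * g c
    = ∑ c : Fin n → D3, lam c * g c
      + ε * (g m + α * g j0 + (1 - α) * g j1 - g a - g b) := by
  have h : ∀ d : Fin n → D3,
      ∑ c : Fin n → D3, (if c = d then (1:ℝ) else 0) * g c = g d := by
    intro d
    rw [Finset.sum_eq_single d]
    · simp
    · intro c _ hc; simp [hc]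
    · intro h; exact absurd (Finset.mem_univ d) h
  have expand : ∀ c : Fin n → D3,
      (lam c + ε * ((if c = m then (1:ℝ) else 0) + α * (if c = j0 then 1 else 0)
      + (1 - α) * (if c = j1 then 1 else 0) - (if c = a then 1 else 0)
      - (if c = b then 1 else 0))) * g c
      = lam c * g c + ε * ((if c = m then (1:ℝ) else 0) * g c)
        + (ε * α) * ((if c = j0 then (1:ℝ) else 0) * g c)
        + (ε * (1 - α)) * ((if c = j1 then (1:ℝ) else 0) * g c)
        - ε * ((if c = a then (1:ℝ) else 0) * g c)
        - ε * ((if c = b then (1:ℝ) else 0) * g c) := by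
    intro c; ring
  rw [Finset.sum_congr rfl (fun c _ => expand c)]
  rw [Finset.sum_sub_distrib, Finset.sum_sub_distrib, Finset.sum_add_distrib,
    Finset.sum_add_distrib, Finset.sum_add_distrib, ← Finset.mul_sum, ← Finset.mul_sum,
    ← Finset.mul_sum, ← Finset.mul_sum, ← Finset.mul_sum, h, h, h, h, h]
  ring

lemma uncross (α : ℝ) (hα : α ∈ Set.Ioc (0:ℝ) 1) (n : ℕ) (x : Fin n → ℝ)
    (lam : (Fin n → D3) → ℝ) (hd : IsDist n lam) (hm : HasMarginal α n lam x)
    (a b : Fin n → D3) (ha : lam a ≠ 0) (hb : lam b ≠ 0) (hab : ¬ a ≤ b) (hba : ¬ b ≤ a) :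
    ∃ lam', IsDist n lam' ∧ HasMarginal α n lam' x ∧ 0 < min (lam a) (lam b) ∧
      ∀ g : (Fin n → D3) → ℝ, ∑ c : Fin n → D3, lam' c * g c =
        ∑ c : Fin n → D3, lam c * g c + min (lam a) (lam b) *
          (g (vmeet0 a b) + α * g (vjoin0 a b) + (1 - α) * g (vjoin1 a b) - g a - g b) := by
  classical
  obtain ⟨hα0, hα1⟩ := hα
  set ε := min (lam a) (lam b) with hε
  have hane : a ≠ b := fun h => hab (le_of_eq h)
  have hpos : ∀ c, 0 ≤ lam c := fun c => (hd.1 c).1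
  have hεa : ε ≤ lam a := min_le_left _ _
  have hεb : ε ≤ lam b := min_le_right _ _
  have hεpos : 0 < ε := lt_min ((hpos a).lt_of_ne (Ne.symm ha)) ((hpos b).lt_of_ne (Ne.symm hb))
  clear hab hba ha hb
  set m := vmeet0 a b
  set j0 := vjoin0 a b
  set j1 := vjoin1 a b
  set lam' : (Fin n → D3) → ℝ := fun c =>
    lam c + ε * ((if c = m then 1 else 0) + α * (if c = j0 then 1 else 0)
      + (1 - α) * (if c = j1 then 1 else 0) - (if c = a then 1 else 0)
      - (if c = b then 1 else 0)) with hlam'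
  have hshift : ∀ g : (Fin n → D3) → ℝ, ∑ c : Fin n → D3, lam' c * g c =
      ∑ c : Fin n → D3, lam c * g c
        + ε * (g m + α * g j0 + (1 - α) * g j1 - g a - g b) :=
    fun g => sum_shift lam ε α m j0 j1 a b g
  have hnonneg : ∀ c, 0 ≤ lam' c := by
    intro c
    have hval : lam' c = lam c + ε * ((if c = m then 1 else 0) + α * (if c = j0 then 1 else 0)
      + (1 - α) * (if c = j1 then 1 else 0) - (if c = a then 1 else 0)
      - (if c = b then 1 else 0)) := rfl
    have h1 : (0:ℝ) ≤ (if c = m then (1:ℝ) else 0) := by positivity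
    have h2 : (0:ℝ) ≤ α * (if c = j0 then (1:ℝ) else 0) := by positivity
    have h3 : (0:ℝ) ≤ (1 - α) * (if c = j1 then (1:ℝ) else 0) := by
      apply mul_nonneg (by linarith); positivity
    rw [hval]
    rcases eq_or_ne c a with hca | hca
    · rw [if_pos hca, if_neg (show ¬ c = b by rw [hca]; exact hane)]
      have hεc : ε ≤ lam c := by rw [hca]; exact hεa
      have hmul : ε * ((0:ℝ) + 0 + 0 - 1 - 0) ≤ ε * ((if c = m then (1:ℝ) else 0)
          + α * (if c = j0 then (1:ℝ) else 0) + (1 - α) * (if c = j1 then (1:ℝ) else 0) - 1 - 0) := by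
        apply mul_le_mul_of_nonneg_left _ hεpos.le
        linarith
      linarith [hmul, hεc]
    · rcases eq_or_ne c b with hcb | hcb
      · rw [if_pos hcb, if_neg hca]
        have hεc : ε ≤ lam c := by rw [hcb]; exact hεb
        have hmul : ε * ((0:ℝ) + 0 + 0 - 0 - 1) ≤ ε * ((if c = m then (1:ℝ) else 0)
            + α * (if c = j0 then (1:ℝ) else 0) + (1 - α) * (if c = j1 then (1:ℝ) else 0) - 0 - 1) := by
          apply mul_le_mul_of_nonneg_left _ hεpos.le
          linarith
        linarith [hmul, hεc]
      · rw [if_neg hca, if_neg hcb]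
        have hmul : ε * ((0:ℝ) + 0 + 0 - 0 - 0) ≤ ε * ((if c = m then (1:ℝ) else 0)
            + α * (if c = j0 then (1:ℝ) else 0) + (1 - α) * (if c = j1 then (1:ℝ) else 0) - 0 - 0) := by
          apply mul_le_mul_of_nonneg_left _ hεpos.le
          linarith
        linarith [hmul, hpos c]
  have hsum1 : ∑ c : Fin n → D3, lam' c = 1 := by
    have := hshift (fun _ => 1)
    simp only [mul_one] at this
    rw [this, hd.2]; ring
  have hle1 : ∀ c, lam' c ≤ 1 := by
    intro c
    calc lam' c = ∑ d ∈ {c}, lam' d := by simp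
    _ ≤ ∑ d : Fin n → D3, lam' d := by
        apply Finset.sum_le_sum_of_subset_of_nonneg (Finset.subset_univ _)
        intro d _ _; exact hnonneg d
    _ = 1 := hsum1
  refine ⟨lam', ⟨fun c => ⟨hnonneg c, hle1 c⟩, hsum1⟩, ?_, hεpos, hshift⟩
  · -- marginal
    intro i
    have := hshift (fun c => D3.emb α (c i))
    rw [this, hm i]
    have : D3.emb α (m i) + α * D3.emb α (j0 i) + (1 - α) * D3.emb α (j1 i)
        - D3.emb α (a i) - D3.emb α (b i) = 0 := by
      have := emb_id α (a i) (b i)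
      simp only [m, j0, j1, vmeet0, vjoin0, vjoin1]
      linarith
    rw [this, mul_zero, add_zero]

end Stmt10
namespace Stmt10
open D3 Finset

lemma nsR_bracket {n : ℕ} (α : ℝ) (a b : Fin n → D3) :
    nsR (vmeet0 a b) + α * nsR (vjoin0 a b) + (1 - α) * nsR (vjoin1 a b)
      - nsR a - nsR b = ∑ i, Hc α (a i) (b i) := by
  simp only [nsR, vmeet0, vjoin0, vjoin1, Hc, Finset.mul_sum, ← Finset.sum_add_distrib,
    ← Finset.sum_sub_distrib]

lemma nsR_sq_bracket {n : ℕ} (α : ℝ) (a b : Fin n → D3) :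
    nsR (vmeet0 a b) * nsR (vmeet0 a b) + α * (nsR (vjoin0 a b) * nsR (vjoin0 a b))
      + (1 - α) * (nsR (vjoin1 a b) * nsR (vjoin1 a b))
      - nsR a * nsR a - nsR b * nsR b
      = ∑ i, ∑ j, Qc α (a i) (b i) (a j) (b j) := by
  have expand : ∀ c : Fin n → D3, nsR c * nsR c = ∑ i, ∑ j, nind (c i) * nind (c j) := by
    intro c; rw [nsR, Finset.sum_mul_sum]
  rw [expand, expand, expand, expand, expand]
  simp only [Qc, vmeet0, vjoin0, vjoin1, Finset.mul_sum, ← Finset.sum_add_distrib,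
    ← Finset.sum_sub_distrib]

lemma exists_chain_min (α : ℝ) (hα : α ∈ Set.Ioc (0:ℝ) 1) (n : ℕ) (x : Fin n → ℝ)
    (f : (Fin n → D3) → ℝ) (hf : AlphaBisub α n f)
    (lam0 : (Fin n → D3) → ℝ) (h0d : IsDist n lam0) (h0m : HasMarginal α n lam0 x) :
    ∃ lam, IsDist n lam ∧ HasMarginal α n lam x ∧ ChainSupp n lam ∧
      ∀ mu, IsDist n mu → HasMarginal α n mu x →
        ∑ c : Fin n → D3, lam c * f c ≤ ∑ c : Fin n → D3, mu c * f c := by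
  classical
  obtain ⟨hα0, hα1⟩ := hα
  set P : Set ((Fin n → D3) → ℝ) := {lam | IsDist n lam ∧ HasMarginal α n lam x} with hP
  have hPclosed : IsClosed P := by
    have hPeq : P = (⋂ a : Fin n → D3, {lam : (Fin n → D3) → ℝ | lam a ∈ Set.Icc (0:ℝ) 1})
        ∩ ({lam : (Fin n → D3) → ℝ | ∑ c : Fin n → D3, lam c = 1}
          ∩ ⋂ i : Fin n, {lam : (Fin n → D3) → ℝ | ∑ c : Fin n → D3, lam c * D3.emb α (c i) = x i}) := by
      ext lam
      simp only [hP, Set.mem_setOf_eq, Set.mem_inter_iff, Set.mem_iInter, Set.mem_Icc,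
        IsDist, HasMarginal]
      tauto
    rw [hPeq]
    refine IsClosed.inter (isClosed_iInter fun a => ?_) (IsClosed.inter ?_ (isClosed_iInter fun i => ?_))
    · exact IsClosed.preimage (continuous_apply a) isClosed_Icc
    · exact isClosed_eq (continuous_finset_sum _ fun c _ => continuous_apply c) continuous_const
    · exact isClosed_eq (continuous_finset_sum _ fun c _ => (continuous_apply c).mul continuous_const)
        continuous_const
  have hPc : IsCompact P := by
    have hK : IsCompact (Set.pi Set.univ (fun _ : Fin n → D3 => Set.Icc (0:ℝ) 1)) :=
      isCompact_univ_pi fun _ => isCompact_Icc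
    refine IsCompact.of_isClosed_subset hK hPclosed ?_
    intro lam hlam
    rw [Set.mem_univ_pi]
    intro a
    exact Set.mem_Icc.2 (hlam.1.1 a)
  have hPne : P.Nonempty := ⟨lam0, h0d, h0m⟩
  set L : ((Fin n → D3) → ℝ) → ℝ := fun lam => ∑ c : Fin n → D3, lam c * f c with hL
  have hLc : Continuous L := continuous_finset_sum _ fun c _ => (continuous_apply c).mul continuous_const
  set Ψ1 : ((Fin n → D3) → ℝ) → ℝ := fun lam => ∑ c : Fin n → D3, lam c * nsR c with hΨ1
  have hΨ1c : Continuous Ψ1 := continuous_finset_sum _ fun c _ => (continuous_apply c).mul continuous_const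
  set Ψ2 : ((Fin n → D3) → ℝ) → ℝ := fun lam => ∑ c : Fin n → D3, lam c * (nsR c * nsR c) with hΨ2
  have hΨ2c : Continuous Ψ2 := continuous_finset_sum _ fun c _ => (continuous_apply c).mul continuous_const
  obtain ⟨l0, hl0P, hl0⟩ := hPc.exists_isMinOn hPne hLc.continuousOn
  set P1 : Set ((Fin n → D3) → ℝ) := P ∩ {lam | L lam = L l0} with hP1
  have hP1closed : IsClosed P1 := hPclosed.inter (isClosed_eq hLc continuous_const)
  have hP1c : IsCompact P1 := IsCompact.of_isClosed_subset hPc hP1closed Set.inter_subset_left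
  obtain ⟨l1, hl1P, hl1⟩ := hP1c.exists_isMinOn ⟨l0, hl0P, rfl⟩ hΨ1c.continuousOn
  set P2 : Set ((Fin n → D3) → ℝ) := P1 ∩ {lam | Ψ1 lam = Ψ1 l1} with hP2
  have hP2closed : IsClosed P2 := hP1closed.inter (isClosed_eq hΨ1c continuous_const)
  have hP2c : IsCompact P2 := IsCompact.of_isClosed_subset hPc hP2closed
    (Set.Subset.trans Set.inter_subset_left Set.inter_subset_left)
  obtain ⟨l2, hl2P, hl2⟩ := hP2c.exists_isMaxOn ⟨l1, hl1P, rfl⟩ hΨ2c.continuousOn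
  have hl2d : IsDist n l2 := hl2P.1.1.1
  have hl2m : HasMarginal α n l2 x := hl2P.1.1.2
  have hchain : ChainSupp n l2 := by
    by_contra hnc
    simp only [ChainSupp, not_forall] at hnc
    obtain ⟨a, b, ha, hb, hcomp⟩ := hnc
    push_neg at hcomp
    obtain ⟨hab, hba⟩ := hcomp
    obtain ⟨lam', hd', hm', hεpos, hshift⟩ := uncross α ⟨hα0, hα1⟩ n x l2 hl2d hl2m a b ha hb hab hba
    have hab' : ∃ i, a i ≠ b i ∧ a i ≠ D3.zero := by
      simp only [Pi.le_def, not_forall, D3.le_iff, not_or] at hab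
      exact hab
    have hba' : ∃ i, b i ≠ a i ∧ b i ≠ D3.zero := by
      simp only [Pi.le_def, not_forall, D3.le_iff, not_or] at hba
      exact hba
    clear hab hba ha hb
    set ε := min (l2 a) (l2 b)
    have hlam'P : lam' ∈ P := ⟨hd', hm'⟩
    -- L value
    have hLval : L lam' = L l2 + ε * (f (vmeet0 a b) + α * f (vjoin0 a b)
        + (1 - α) * f (vjoin1 a b) - f a - f b) := hshift f
    have hLle : L lam' ≤ L l2 := by
      have hBf : f (vmeet0 a b) + α * f (vjoin0 a b) + (1 - α) * f (vjoin1 a b) - f a - f b ≤ 0 := by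
        have := hf a b; linarith
      nlinarith [hεpos.le]
    have hLeq : L lam' = L l0 := le_antisymm
      (by
        have h1 : L l2 = L l0 := hl2P.1.2
        linarith)
      (isMinOn_iff.mp hl0 lam' hlam'P)
    have hlam'P1 : lam' ∈ P1 := ⟨hlam'P, hLeq⟩
    -- Ψ1
    have hΨ1val : Ψ1 lam' = Ψ1 l2 + ε * ∑ i, Hc α (a i) (b i) := by
      simp only [hΨ1]
      rw [hshift nsR, nsR_bracket]
    have hHle : ∀ i : Fin n, Hc α (a i) (b i) ≤ 0 := by
      intro i
      rw [Hc_eq]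
      split
      · linarith
      · exact le_rfl
    have hB1le : ∑ i, Hc α (a i) (b i) ≤ 0 := Finset.sum_nonpos (fun i _ => hHle i)
    have hΨ1ge : Ψ1 l2 ≤ Ψ1 lam' := by
      have h1 : Ψ1 l2 = Ψ1 l1 := hl2P.2
      have h2 : Ψ1 l1 ≤ Ψ1 lam' := isMinOn_iff.mp hl1 lam' hlam'P1
      linarith
    have hB1zero : ∑ i, Hc α (a i) (b i) = 0 := by
      by_contra hne
      have hlt : ∑ i, Hc α (a i) (b i) < 0 := lt_of_le_of_ne hB1le hne
      have : ε * ∑ i, Hc α (a i) (b i) < 0 := mul_neg_of_pos_of_neg hεpos hlt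
      linarith
    have hnoX : ∀ i : Fin n, ¬(a i ≠ D3.zero ∧ b i ≠ D3.zero ∧ a i ≠ b i) := by
      intro i hX
      have h0 := (Finset.sum_eq_zero_iff_of_nonpos (fun i _ => hHle i)).mp hB1zero i (Finset.mem_univ i)
      rw [Hc_eq, if_pos hX] at h0
      linarith
    obtain ⟨i0, hi0ne, hi0nz⟩ := hab'
    have hbi0 : b i0 = D3.zero := by
      by_contra h; exact hnoX i0 ⟨hi0nz, h, hi0ne⟩
    obtain ⟨j0i, hj0ne, hj0nz⟩ := hba'
    have haj0 : a j0i = D3.zero := by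
      by_contra h; exact hnoX j0i ⟨h, hj0nz, fun he => hj0ne he.symm⟩
    -- Ψ2
    have hlam'P2 : lam' ∈ P2 := by
      refine ⟨hlam'P1, ?_⟩
      show Ψ1 lam' = Ψ1 l1
      rw [hΨ1val, hB1zero, mul_zero, add_zero]
      exact hl2P.2
    have hΨ2val : Ψ2 lam' = Ψ2 l2 + ε * ∑ i, ∑ j, Qc α (a i) (b i) (a j) (b j) := by
      simp only [hΨ2]
      rw [hshift (fun c => nsR c * nsR c), nsR_sq_bracket]
    have hB2pos : 0 < ∑ i, ∑ j, Qc α (a i) (b i) (a j) (b j) := by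
      apply Finset.sum_pos'
      · intro i _
        exact Finset.sum_nonneg fun j _ =>
          Qc_nonneg α ⟨hα0, hα1⟩ _ _ _ _ (hnoX i) (hnoX j)
      · refine ⟨i0, Finset.mem_univ _, ?_⟩
        apply Finset.sum_pos' (fun j _ => Qc_nonneg α ⟨hα0, hα1⟩ _ _ _ _ (hnoX i0) (hnoX j))
        refine ⟨j0i, Finset.mem_univ _, ?_⟩
        rw [Qc_one α _ _ _ _ hi0nz hbi0 haj0 hj0nz]
        norm_num
    have hmax : Ψ2 lam' ≤ Ψ2 l2 := isMaxOn_iff.mp hl2 lam' hlam'P2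
    have : 0 < ε * ∑ i, ∑ j, Qc α (a i) (b i) (a j) (b j) := mul_pos hεpos hB2pos
    linarith
  refine ⟨l2, hl2d, hl2m, hchain, fun mu hmd hmm => ?_⟩
  have h1 : L l2 = L l0 := hl2P.1.2
  have h2 : L l0 ≤ L mu := isMinOn_iff.mp hl0 mu ⟨hmd, hmm⟩
  show L l2 ≤ L mu
  linarith

end Stmt10
namespace Stmt10
open D3 Finset

/-- value of the mass of coordinate-i fibers, determined by x -/
noncomputable def cval (α : ℝ) (x : Fin n → ℝ) (i : Fin n) (d : D3) : ℝ :=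
  if d = D3.one then max (x i) 0 else max (-(x i) / α) 0

lemma massVal {n : ℕ} (α : ℝ) (hα : α ∈ Set.Ioc (0:ℝ) 1) (x : Fin n → ℝ)
    (lam : (Fin n → D3) → ℝ) (hd : IsDist n lam) (hm : HasMarginal α n lam x)
    (hc : ChainSupp n lam) (i : Fin n) (d : D3) (hdz : d ≠ D3.zero) :
    ∑ c ∈ Finset.univ.filter (fun c : Fin n → D3 => c i = d), lam c = cval α x i d := by
  classical
  obtain ⟨hα0, hα1⟩ := hα
  set mp := ∑ c ∈ Finset.univ.filter (fun c : Fin n → D3 => c i = D3.one), lam c with hmp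
  set mn := ∑ c ∈ Finset.univ.filter (fun c : Fin n → D3 => c i = D3.neg), lam c with hmn
  have hmp0 : 0 ≤ mp := Finset.sum_nonneg fun c _ => (hd.1 c).1
  have hmn0 : 0 ≤ mn := Finset.sum_nonneg fun c _ => (hd.1 c).1
  have hxi : x i = mp - α * mn := by
    rw [← hm i]
    have hpt : ∀ c : Fin n → D3, lam c * D3.emb α (c i)
        = (if c i = D3.one then lam c else 0) + (-α) * (if c i = D3.neg then lam c else 0) := by
      intro c
      rcases h : c i <;> simp [h, D3.emb] <;> ring
    rw [Finset.sum_congr rfl fun c _ => hpt c, Finset.sum_add_distrib, ← Finset.mul_sum,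
      ← Finset.sum_filter, ← Finset.sum_filter]
    ring
  have hdisj : mp = 0 ∨ mn = 0 := by
    by_contra h
    push_neg at h
    obtain ⟨c, hcmem, hcne⟩ := Finset.exists_ne_zero_of_sum_ne_zero h.1
    obtain ⟨c', hcmem', hcne'⟩ := Finset.exists_ne_zero_of_sum_ne_zero h.2
    rw [Finset.mem_filter] at hcmem hcmem'
    have hone : c i = D3.one := hcmem.2
    have hneg : c' i = D3.neg := hcmem'.2
    rcases hc c c' hcne hcne' with hle | hle
    · have := hle i
      rw [D3.le_iff, hone, hneg] at this
      rcases this with h' | h' <;> exact D3.noConfusion h'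
    · have := hle i
      rw [D3.le_iff, hone, hneg] at this
      rcases this with h' | h' <;> exact D3.noConfusion h'
  have hkey : mp = max (x i) 0 ∧ mn = max (-(x i) / α) 0 := by
    rcases hdisj with h | h
    · -- mp = 0, x i = -α mn ≤ 0
      have hx : x i = -(α * mn) := by rw [hxi, h]; ring
      constructor
      · rw [h, max_eq_right]
        nlinarith
      · rw [max_eq_left]
        · rw [hx]; field_simp
        · have h1 : 0 ≤ -(x i) := by nlinarith
          exact div_nonneg h1 hα0.le
    · -- mn = 0, x i = mp ≥ 0
      have hx : x i = mp := by rw [hxi, h]; ring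
      constructor
      · rw [max_eq_left]; exact hx.symm; linarith
      · rw [h, max_eq_right]
        apply div_nonpos_of_nonpos_of_nonneg <;> linarith
  rcases d with _ | _ | _
  · simpa [cval] using hkey.2
  · exact absurd rfl hdz
  · simpa [cval] using hkey.1

end Stmt10
namespace Stmt10
open D3 Finset

attribute [local instance 10] Classical.propDecidable

lemma Ukey {n : ℕ} (α : ℝ) (hα : α ∈ Set.Ioc (0:ℝ) 1) (x : Fin n → ℝ)
    (lam : (Fin n → D3) → ℝ) (hd : IsDist n lam) (hm : HasMarginal α n lam x)
    (hc : ChainSupp n lam) (a : Fin n → D3) (hz : ∃ i, a i ≠ D3.zero) :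
    ∃ i₀, a i₀ ≠ D3.zero ∧
      (∑ c ∈ Finset.univ.filter (fun c : Fin n → D3 => a ≤ c), lam c = cval α x i₀ (a i₀)) ∧
      (∀ i, a i ≠ D3.zero →
        ∑ c ∈ Finset.univ.filter (fun c : Fin n → D3 => a ≤ c), lam c ≤ cval α x i (a i)) := by
  classical
  set T : Fin n → Finset (Fin n → D3) :=
    fun i => Finset.univ.filter (fun c => c i = a i ∧ lam c ≠ 0) with hT
  set s : Finset (Fin n) := Finset.univ.filter (fun i => a i ≠ D3.zero) with hs
  have hsne : s.Nonempty := by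
    obtain ⟨i, hi⟩ := hz
    exact ⟨i, by simp [hs, hi]⟩
  have hTcomp : ∀ i ∈ s, ∀ j ∈ s, T i ⊆ T j ∨ T j ⊆ T i := by
    intro i hi j hj
    rw [hs, Finset.mem_filter] at hi hj
    by_contra h
    push_neg at h
    obtain ⟨h1, h2⟩ := h
    obtain ⟨c, hcTi, hcnTj⟩ := Finset.not_subset.mp h1
    obtain ⟨c', hcTj', hcnTi'⟩ := Finset.not_subset.mp h2
    rw [hT, Finset.mem_filter] at hcTi hcTj' hcnTj hcnTi'
    simp only [Finset.mem_univ, true_and] at hcTi hcTj' hcnTj hcnTi'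
    rcases hc c c' hcTi.2 hcTj'.2 with hle | hle
    · -- c ≤ c' : c' j = a j? we know c' j = a j; need c i = a i → c' i = a i
      have := hle i
      rw [D3.le_iff] at this
      rcases this with he | he
      · exact hcnTi' ⟨he ▸ hcTi.1, hcTj'.2⟩
      · exact hi.2 (by rw [← hcTi.1, he])
    · have := hle j
      rw [D3.le_iff] at this
      rcases this with he | he
      · exact hcnTj ⟨he ▸ hcTj'.1, hcTi.2⟩
      · exact hj.2 (by rw [← hcTj'.1, he])
  obtain ⟨i₀, hi₀s, hi₀min⟩ := Finset.exists_min_image s (fun i => (T i).card) hsne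
  have hsub : ∀ i ∈ s, T i₀ ⊆ T i := by
    intro i hi
    rcases hTcomp i₀ hi₀s i hi with h | h
    · exact h
    · rw [Finset.eq_of_subset_of_card_le h (hi₀min i hi)]
  have hi₀nz : a i₀ ≠ D3.zero := by
    rw [hs, Finset.mem_filter] at hi₀s; exact hi₀s.2
  have hfeq : Finset.univ.filter (fun c : Fin n → D3 => a ≤ c ∧ lam c ≠ 0) = T i₀ := by
    ext c
    rw [hT]
    simp only [Finset.mem_filter, Finset.mem_univ, true_and]
    constructor
    · rintro ⟨hle, hne⟩
      refine ⟨?_, hne⟩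
      have := hle i₀
      rw [D3.le_iff] at this
      rcases this with he | he
      · exact he.symm
      · exact absurd he hi₀nz
    · rintro ⟨hci, hne⟩
      refine ⟨?_, hne⟩
      intro i
      rw [D3.le_iff]
      by_cases hzi : a i = D3.zero
      · exact Or.inr hzi
      · have hci' : c ∈ T i := hsub i (by simp [hs, hzi]) (by rw [hT]; simp [hci, hne])
        rw [hT, Finset.mem_filter] at hci'
        exact Or.inl hci'.2.1.symm
  have hUsum : ∑ c ∈ Finset.univ.filter (fun c : Fin n → D3 => a ≤ c), lam c
      = ∑ c ∈ T i₀, lam c := by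
    rw [← hfeq]
    apply (Finset.sum_subset ?_ ?_).symm
    · intro c hcmem
      rw [Finset.mem_filter] at hcmem ⊢
      exact ⟨hcmem.1, hcmem.2.1⟩
    · intro c hcmem hcnot
      rw [Finset.mem_filter] at hcmem hcnot
      by_contra h
      exact hcnot ⟨hcmem.1, hcmem.2, h⟩
  have hTsum : ∀ i ∈ s, ∑ c ∈ T i, lam c = cval α x i (a i) := by
    intro i hi
    rw [hs, Finset.mem_filter] at hi
    rw [← massVal α hα x lam hd hm hc i (a i) hi.2]
    apply Finset.sum_subset
    · intro c hcmem
      rw [hT, Finset.mem_filter] at hcmem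
      rw [Finset.mem_filter]
      exact ⟨hcmem.1, hcmem.2.1⟩
    · intro c hcmem hcnot
      rw [Finset.mem_filter] at hcmem
      rw [hT, Finset.mem_filter] at hcnot
      by_contra h
      exact hcnot ⟨hcmem.1, hcmem.2, h⟩
  refine ⟨i₀, hi₀nz, ?_, ?_⟩
  · rw [hUsum, hTsum i₀ hi₀s]
  · intro i hi
    have his : i ∈ s := by simp [hs, hi]
    rw [hUsum, ← hTsum i his]
    exact Finset.sum_le_sum_of_subset_of_nonneg (hsub i his) (fun c _ _ => (hd.1 c).1)

lemma zc_lt {n : ℕ} (a c : Fin n → D3) (hle : a ≤ c) (hne : a ≠ c) : zc c < zc a := by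
  classical
  apply Finset.card_lt_card
  rw [Finset.ssubset_iff_of_subset]
  · have : ∃ i, a i ≠ c i := by
      by_contra h
      push_neg at h
      exact hne (funext h)
    obtain ⟨i, hi⟩ := this
    have hiz : a i = D3.zero := by
      have := hle i
      rw [D3.le_iff] at this
      rcases this with h | h
      · exact absurd h hi
      · exact h
    refine ⟨i, ?_, ?_⟩
    · simp [zc, hiz]
    · simp only [zc, Finset.mem_filter, Finset.mem_univ, true_and]
      intro h
      exact hi (hiz.trans h.symm)
  · intro i hi
    rw [Finset.mem_filter] at hi ⊢
    refine ⟨hi.1, ?_⟩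
    have := hle i
    rw [D3.le_iff] at this
    rcases this with h | h
    · rw [h]; exact hi.2
    · exact h

lemma chain_unique (α : ℝ) (hα : α ∈ Set.Ioc (0:ℝ) 1) (n : ℕ) (x : Fin n → ℝ)
    (lam mu : (Fin n → D3) → ℝ)
    (hld : IsDist n lam) (hlm : HasMarginal α n lam x) (hlc : ChainSupp n lam)
    (hmd : IsDist n mu) (hmm : HasMarginal α n mu x) (hmc : ChainSupp n mu) :
    lam = mu := by
  classical
  have hU : ∀ a : Fin n → D3,
      ∑ c ∈ Finset.univ.filter (fun c : Fin n → D3 => a ≤ c), lam c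
      = ∑ c ∈ Finset.univ.filter (fun c : Fin n → D3 => a ≤ c), mu c := by
    intro a
    by_cases hz : ∃ i, a i ≠ D3.zero
    · obtain ⟨i₀, hi₀, hval, hle⟩ := Ukey α hα x lam hld hlm hlc a hz
      obtain ⟨i₁, hi₁, hval', hle'⟩ := Ukey α hα x mu hmd hmm hmc a hz
      have h1 : ∑ c ∈ Finset.univ.filter (fun c : Fin n → D3 => a ≤ c), lam c
          ≤ ∑ c ∈ Finset.univ.filter (fun c : Fin n → D3 => a ≤ c), mu c := by
        rw [hval']
        exact hle i₁ hi₁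
      have h2 : ∑ c ∈ Finset.univ.filter (fun c : Fin n → D3 => a ≤ c), mu c
          ≤ ∑ c ∈ Finset.univ.filter (fun c : Fin n → D3 => a ≤ c), lam c := by
        rw [hval]
        exact hle' i₀ hi₀
      linarith
    · push_neg at hz
      have hfull : Finset.univ.filter (fun c : Fin n → D3 => a ≤ c) = Finset.univ := by
        apply Finset.filter_true_of_mem
        intro c _
        intro i
        rw [D3.le_iff]
        exact Or.inr (hz i)
      rw [hfull, hld.2, hmd.2]
  suffices h : ∀ k, ∀ a : Fin n → D3, zc a = k → lam a = mu a by
    funext a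
    exact h (zc a) a rfl
  intro k
  induction k using Nat.strong_induction_on with
  | _ k ih =>
    intro a hk
    have hmem : a ∈ Finset.univ.filter (fun c : Fin n → D3 => a ≤ c) := by
      simp
    have hsplitl := (Finset.add_sum_erase _ lam hmem).symm
    have hsplitm := (Finset.add_sum_erase _ mu hmem).symm
    have hrest : ∑ c ∈ (Finset.univ.filter (fun c : Fin n → D3 => a ≤ c)).erase a, lam c
        = ∑ c ∈ (Finset.univ.filter (fun c : Fin n → D3 => a ≤ c)).erase a, mu c := by
      apply Finset.sum_congr rfl
      intro c hc
      rw [Finset.mem_erase, Finset.mem_filter] at hc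
      have hlt : zc c < zc a := zc_lt a c hc.2.2 (fun h => hc.1 h.symm)
      exact ih (zc c) (hk ▸ hlt) c rfl
    have := hU a
    rw [hsplitl, hsplitm, hrest] at this
    linarith

end Stmt10
/-- if `f` is α-bisubmodular then `f^L = f⁻` on `[-α,1]ⁿ`. -/
theorem stmt10 (α : ℝ) (hα : α ∈ Set.Ioc (0 : ℝ) 1) (n : ℕ) (f : (Fin n → D3) → ℝ)
    (hf : AlphaBisub α n f)
    (Λ : (Fin n → ℝ) → (Fin n → D3) → ℝ)
    (hΛ : ∀ x ∈ Box α n, IsDist n (Λ x) ∧ HasMarginal α n (Λ x) x ∧ ChainSupp n (Λ x))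
    (x : Fin n → ℝ) (hx : x ∈ Box α n) :
    ∑ a : Fin n → D3, Λ x a * f a = cClos α n f x := by
  obtain ⟨hΛd, hΛm, hΛc⟩ := hΛ x hx
  obtain ⟨lam2, h2d, h2m, h2c, h2min⟩ := Stmt10.exists_chain_min α hα n x f hf (Λ x) hΛd hΛm
  have heq : Λ x = lam2 := Stmt10.chain_unique α hα n x (Λ x) lam2 hΛd hΛm hΛc h2d h2m h2c
  unfold cClos
  have hSne : {y | ∃ lam, IsDist n lam ∧ HasMarginal α n lam x
      ∧ y = ∑ a : Fin n → D3, lam a * f a}.Nonempty :=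
    ⟨∑ a : Fin n → D3, Λ x a * f a, Λ x, hΛd, hΛm, rfl⟩
  have hbdd : BddBelow {y | ∃ lam, IsDist n lam ∧ HasMarginal α n lam x
      ∧ y = ∑ a : Fin n → D3, lam a * f a} := by
    refine ⟨∑ c : Fin n → D3, lam2 c * f c, ?_⟩
    rintro y ⟨mu, hmd, hmm, rfl⟩
    exact h2min mu hmd hmm
  apply le_antisymm
  · refine le_csInf hSne ?_
    rintro y ⟨mu, hmd, hmm, rfl⟩
    rw [heq]
    exact h2min mu hmd hmm
  · exact csInf_le hbdd ⟨Λ x, hΛd, hΛm, rfl⟩
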